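/- Fix an integer n ≥ 1 and reals b₁, …, bₙ > 0. Let τ > 0 satisfy sin(bᵢτ/2) ≠ 0 for all i, and let h ∈ ℝ^{2n}, rᵢ = √(h_{2i−1}² + h_{2i}²). Then the matrix D(τ) = J̄⁻¹(e^{τJ̄} − I_{2n}) is invertible, and the row vector ∇_h ẑ(τ, h) (with entries (∂ẑ/∂h_j)(τ, h) = h_j·(bᵢτ − sin(bᵢτ))/bᵢ for j ∈ {2i−1, 2i}) satisfies: ∇_h ẑ(τ, h) · D(τ)⁻¹ · ( x̂(τ, h) − τ·ĥ(τ, h) ) − ( ẑ(τ, h) − τ·(∂ẑ/∂t)(τ, h) ) = Σ_{i=1}^{n} (rᵢ²/2)·( 3τ − bᵢτ²·cos(bᵢτ/2)/sin(bᵢτ/2) − sin(bᵢτ)/bᵢ ), where ∂ẑ/∂t(τ, h) = Σ_{i=1}^{n} (rᵢ²/2)·(1 − cos(bᵢτ)). -/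

import Mathlib

open Real Matrix

/-- The `2n×2n` block-diagonal matrix `J̄` whose `i`-th `2×2` diagonal block is
`[[0, bᵢ], [−bᵢ, 0]]`. -/
noncomputable def Jbar (n : ℕ) (b : Fin n → ℝ) :
    Matrix (Fin 2 × Fin n) (Fin 2 × Fin n) ℝ :=
  Matrix.blockDiagonal fun i => !![0, b i; -b i, 0]

/-- `D(τ) = J̄⁻¹(e^{τJ̄} − I)`. -/
noncomputable def Dmat (n : ℕ) (b : Fin n → ℝ) (τ : ℝ) :
    Matrix (Fin 2 × Fin n) (Fin 2 × Fin n) ℝ :=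
  (Jbar n b)⁻¹ * (NormedSpace.exp (τ • Jbar n b) - 1)

/-- The covector `ĥ(t, h) = e^{tJ̄}h` of the nilpotent geodesic flow. -/
noncomputable def hhat (n : ℕ) (b : Fin n → ℝ) (t : ℝ) (h : Fin 2 × Fin n → ℝ) :
    Fin 2 × Fin n → ℝ :=
  (NormedSpace.exp (t • Jbar n b)).mulVec h

/-- The horizontal component `x̂(t, h) = J̄⁻¹(e^{tJ̄} − I)h`. -/
noncomputable def xhat (n : ℕ) (b : Fin n → ℝ) (t : ℝ) (h : Fin 2 × Fin n → ℝ) :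
    Fin 2 × Fin n → ℝ :=
  (Dmat n b t).mulVec h

/-- The vertical component
`ẑ(t, h) = Σ_i (h_{2i−1}² + h_{2i}²)·(bᵢt − sin(bᵢt))/(2bᵢ)`;
the coordinate `h_{2i−1}` is the `(0, i)` entry of `h` and `h_{2i}` its `(1, i)` entry. -/
noncomputable def zhat (n : ℕ) (b : Fin n → ℝ) (t : ℝ) (h : Fin 2 × Fin n → ℝ) : ℝ :=
  ∑ i, (h (0, i) ^ 2 + h (1, i) ^ 2) * (b i * t - Real.sin (b i * t)) / (2 * b i)

/-- The gradient (row vector) of `ẑ` in `h`: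
`(∂ẑ/∂h_j)(τ, h) = h_j·(bᵢτ − sin(bᵢτ))/bᵢ` for `j ∈ {2i−1, 2i}`. -/
noncomputable def gradz (n : ℕ) (b : Fin n → ℝ) (τ : ℝ) (h : Fin 2 × Fin n → ℝ) :
    Fin 2 × Fin n → ℝ :=
  fun j => h j * (b j.2 * τ - Real.sin (b j.2 * τ)) / b j.2

noncomputable def J2 : Matrix (Fin 2) (Fin 2) ℝ := !![0,1;-1,0]

lemma J2_sq : J2 * J2 = -1 := by
  ext i j
  fin_cases i <;> fin_cases j <;> simp [J2, Matrix.mul_apply, Fin.sum_univ_two, Matrix.one_apply]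

noncomputable def phi : ℂ →ₐ[ℝ] Matrix (Fin 2) (Fin 2) ℝ := Complex.lift ⟨J2, J2_sq⟩

lemma phi_apply (z : ℂ) : phi z = z.re • 1 + z.im • J2 := by
  simp [phi, Complex.lift, Complex.liftAux_apply, Algebra.algebraMap_eq_smul_one]

lemma exp_smul_J2 (θ : ℝ) :
    NormedSpace.exp (θ • J2) = !![Real.cos θ, Real.sin θ; -Real.sin θ, Real.cos θ] := by
  letI : SeminormedRing (Matrix (Fin 2) (Fin 2) ℝ) := Matrix.linftyOpSemiNormedRing
  letI : NormedRing (Matrix (Fin 2) (Fin 2) ℝ) := Matrix.linftyOpNormedRing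
  letI : NormedAlgebra ℝ (Matrix (Fin 2) (Fin 2) ℝ) := Matrix.linftyOpNormedAlgebra
  have hc : Continuous phi := phi.toLinearMap.continuous_of_finiteDimensional
  have h2 := NormedSpace.map_exp (phi : ℂ →+* Matrix (Fin 2) (Fin 2) ℝ) hc (θ * Complex.I)
  have h1 : (phi : ℂ →+* Matrix (Fin 2) (Fin 2) ℝ) (θ * Complex.I) = θ • J2 := by
    show phi _ = _
    rw [phi_apply]; simp
  rw [h1] at h2
  refine h2.symm.trans ?_
  rw [← Complex.exp_eq_exp_ℂ, Complex.exp_mul_I]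
  show phi _ = _
  rw [phi_apply]
  ext i j
  fin_cases i <;> fin_cases j <;>
    simp [J2, Complex.cos_ofReal_re, Complex.sin_ofReal_re, Matrix.one_apply]

lemma exp_tJbar (n : ℕ) (b : Fin n → ℝ) (τ : ℝ) :
    NormedSpace.exp (τ • Jbar n b) =
      Matrix.blockDiagonal fun i =>
        !![Real.cos (b i * τ), Real.sin (b i * τ);
           -Real.sin (b i * τ), Real.cos (b i * τ)] := by
  have h1 : τ • Jbar n b = Matrix.blockDiagonal fun i => (b i * τ) • J2 := by
    rw [Jbar, ← Matrix.blockDiagonal_smul]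
    refine congrArg _ (funext fun i => ?_)
    ext j k
    fin_cases j <;> fin_cases k <;> simp [J2] <;> ring
  rw [h1, Matrix.exp_blockDiagonal]
  letI : SeminormedRing (Matrix (Fin 2) (Fin 2) ℝ) := Matrix.linftyOpSemiNormedRing
  letI : NormedRing (Matrix (Fin 2) (Fin 2) ℝ) := Matrix.linftyOpNormedRing
  letI : NormedAlgebra ℝ (Matrix (Fin 2) (Fin 2) ℝ) := Matrix.linftyOpNormedAlgebra
  letI : NormedAlgebra ℚ (Matrix (Fin 2) (Fin 2) ℝ) := NormedAlgebra.restrictScalars ℚ ℝ _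
  erw [Pi.exp_def]
  exact congrArg _ (funext fun i => exp_smul_J2 _)

lemma Jbar_inv (n : ℕ) (b : Fin n → ℝ) (hb : ∀ i, 0 < b i) :
    (Jbar n b)⁻¹ = Matrix.blockDiagonal fun i => !![0, -(b i)⁻¹; (b i)⁻¹, 0] := by
  apply Matrix.inv_eq_right_inv
  rw [Jbar, ← Matrix.blockDiagonal_mul, ← Matrix.blockDiagonal_one]
  refine congrArg _ (funext fun i => ?_)
  have : b i ≠ 0 := (hb i).ne'
  ext j k
  fin_cases j <;> fin_cases k <;>
    simp [Matrix.mul_apply, Fin.sum_univ_two, Matrix.one_apply, this]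

lemma Dmat_eq (n : ℕ) (b : Fin n → ℝ) (hb : ∀ i, 0 < b i) (τ : ℝ) :
    Dmat n b τ = Matrix.blockDiagonal fun i =>
      (b i)⁻¹ • !![Real.sin (b i * τ), 1 - Real.cos (b i * τ);
                   Real.cos (b i * τ) - 1, Real.sin (b i * τ)] := by
  rw [Dmat, Jbar_inv n b hb, exp_tJbar, ← Matrix.blockDiagonal_one, ← Matrix.blockDiagonal_sub,
    ← Matrix.blockDiagonal_mul]
  refine congrArg _ (funext fun i => ?_)
  ext j k
  fin_cases j <;> fin_cases k <;>
    simp [Matrix.mul_apply, Fin.sum_univ_two, Matrix.one_apply, Matrix.smul_apply] <;> ring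

noncomputable def Emat (n : ℕ) (b : Fin n → ℝ) (τ : ℝ) : Fin n → Matrix (Fin 2) (Fin 2) ℝ :=
  fun i => (b i / (2 - 2 * Real.cos (b i * τ))) •
    !![Real.sin (b i * τ), Real.cos (b i * τ) - 1;
       1 - Real.cos (b i * τ), Real.sin (b i * τ)]

lemma den_ne (B τ : ℝ) (hs : Real.sin (B * τ / 2) ≠ 0) :
    2 - 2 * Real.cos (B * τ) ≠ 0 := by
  have h2 : B * τ = 2 * (B * τ / 2) := by ring
  rw [h2, Real.cos_two_mul']
  have hpy := Real.sin_sq_add_cos_sq (B * τ / 2)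
  have : 2 - 2 * (Real.cos (B*τ/2) ^ 2 - Real.sin (B*τ/2) ^ 2) = 4 * Real.sin (B*τ/2)^2 := by
    nlinarith [hpy]
  rw [this]
  positivity

lemma Dmat_mul_E (n : ℕ) (b : Fin n → ℝ) (hb : ∀ i, 0 < b i) (τ : ℝ)
    (hs : ∀ i, Real.sin (b i * τ / 2) ≠ 0) :
    Dmat n b τ * Matrix.blockDiagonal (Emat n b τ) = 1 := by
  rw [Dmat_eq n b hb τ, ← Matrix.blockDiagonal_mul, ← Matrix.blockDiagonal_one]
  refine congrArg _ (funext fun i => ?_)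
  have hB : b i ≠ 0 := (hb i).ne'
  have hden := den_ne (b i) τ (hs i)
  have hpy := Real.sin_sq_add_cos_sq (b i * τ)
  have key : b i * Real.sin (b i * τ) ^ 2 + b i * Real.cos (b i * τ) ^ 2 = b i := by
    linear_combination (b i) * hpy
  ext j k
  fin_cases j <;> fin_cases k <;>
    · simp [Emat, Matrix.mul_apply, Fin.sum_univ_two, Matrix.one_apply, Matrix.smul_apply]
      have hden' : 1 - Real.cos (b i * τ) ≠ 0 := fun h0 => hden (by linarith)
      field_simp
      linarith [key]

lemma Dmat_isUnit (n : ℕ) (b : Fin n → ℝ) (hb : ∀ i, 0 < b i) (τ : ℝ)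
    (hs : ∀ i, Real.sin (b i * τ / 2) ≠ 0) : IsUnit (Dmat n b τ) :=
  (Matrix.isUnit_iff_isUnit_det _).2 (Matrix.isUnit_det_of_right_inverse (Dmat_mul_E n b hb τ hs))

lemma Dmat_inv (n : ℕ) (b : Fin n → ℝ) (hb : ∀ i, 0 < b i) (τ : ℝ)
    (hs : ∀ i, Real.sin (b i * τ / 2) ≠ 0) :
    (Dmat n b τ)⁻¹ = Matrix.blockDiagonal (Emat n b τ) :=
  Matrix.inv_eq_right_inv (Dmat_mul_E n b hb τ hs)

lemma bd_mulVec {n : ℕ} (M : Fin n → Matrix (Fin 2) (Fin 2) ℝ) (u : Fin 2 × Fin n → ℝ)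
    (p : Fin 2 × Fin n) :
    (Matrix.blockDiagonal M).mulVec u p = ∑ k, M p.2 p.1 k * u (k, p.2) := by
  obtain ⟨j, i⟩ := p
  simp [Matrix.mulVec, dotProduct, Fintype.sum_prod_type, Matrix.blockDiagonal_apply,
    Finset.sum_ite_eq, eq_comm]

lemma key (B t h0 h1 : ℝ) (hB : B ≠ 0) (hsx : Real.sin (B * t / 2) ≠ 0) :
    h0 * (B * t - Real.sin (B * t)) / B *
          (B / (2 - 2 * Real.cos (B * t)) * Real.sin (B * t) *
              (B⁻¹ * Real.sin (B * t) * h0 + B⁻¹ * (1 - Real.cos (B * t)) * h1 -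
                t * (Real.cos (B * t) * h0 + Real.sin (B * t) * h1)) +
            B / (2 - 2 * Real.cos (B * t)) * (Real.cos (B * t) - 1) *
              (B⁻¹ * (Real.cos (B * t) - 1) * h0 + B⁻¹ * Real.sin (B * t) * h1 -
                t * (-Real.sin (B * t) * h0 + Real.cos (B * t) * h1))) +
        h1 * (B * t - Real.sin (B * t)) / B *
          (B / (2 - 2 * Real.cos (B * t)) * (1 - Real.cos (B * t)) *
              (B⁻¹ * Real.sin (B * t) * h0 + B⁻¹ * (1 - Real.cos (B * t)) * h1 -
                t * (Real.cos (B * t) * h0 + Real.sin (B * t) * h1)) +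
            B / (2 - 2 * Real.cos (B * t)) * Real.sin (B * t) *
              (B⁻¹ * (Real.cos (B * t) - 1) * h0 + B⁻¹ * Real.sin (B * t) * h1 -
                t * (-Real.sin (B * t) * h0 + Real.cos (B * t) * h1))) -
      ((h0 ^ 2 + h1 ^ 2) * (B * t - Real.sin (B * t)) / (2 * B) -
        t * ((h0 ^ 2 + h1 ^ 2) / 2 * (1 - Real.cos (B * t)))) =
    (h0 ^ 2 + h1 ^ 2) / 2 *
      (3 * t - B * t ^ 2 * Real.cos (B * t / 2) / Real.sin (B * t / 2) - Real.sin (B * t) / B) := by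
  have hpy := Real.sin_sq_add_cos_sq (B * t / 2)
  have e : B * t = 2 * (B * t / 2) := by ring
  have hs2 : Real.sin (B * t) = 2 * Real.sin (B * t / 2) * Real.cos (B * t / 2) := by
    calc Real.sin (B * t) = Real.sin (2 * (B * t / 2)) := by rw [← e]
    _ = _ := Real.sin_two_mul _
  have hc2 : Real.cos (B * t) = 1 - 2 * Real.sin (B * t / 2) ^ 2 := by
    calc Real.cos (B * t) = Real.cos (2 * (B * t / 2)) := by rw [← e]
    _ = Real.cos (B * t / 2) ^ 2 - Real.sin (B * t / 2) ^ 2 := Real.cos_two_mul' _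
    _ = _ := by linear_combination hpy
  rw [hs2, hc2]
  have h4 : 2 - 2 * (1 - 2 * Real.sin (B * t / 2) ^ 2) = 4 * Real.sin (B * t / 2) ^ 2 := by ring
  rw [h4]
  field_simp
  linear_combination (16 * Real.sin (B*t/2)^2 * (h0^2 + h1^2) *
    (B * t - Real.sin (B*t/2) * Real.cos (B*t/2))) * hpy

/-- For `n ≥ 1`, `b₁, …, bₙ > 0`, `τ > 0` with `sin(bᵢτ/2) ≠ 0`
for all `i`, and `h ∈ ℝ^{2n}` with `rᵢ = √(h_{2i−1}² + h_{2i}²)`: the matrix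
`D(τ) = J̄⁻¹(e^{τJ̄} − I)` is invertible and
`∇_h ẑ(τ,h) · D(τ)⁻¹ · (x̂(τ,h) − τ·ĥ(τ,h)) − (ẑ(τ,h) − τ·∂ẑ/∂t(τ,h))
  = Σ_i (rᵢ²/2)·(3τ − bᵢτ²·cos(bᵢτ/2)/sin(bᵢτ/2) − sin(bᵢτ)/bᵢ)`,
where `∂ẑ/∂t(τ,h) = Σ_i (rᵢ²/2)·(1 − cos(bᵢτ))`. -/
theorem statement14 (n : ℕ) (hn : 1 ≤ n) (b : Fin n → ℝ) (hb : ∀ i, 0 < b i)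
    (τ : ℝ) (hτ : 0 < τ) (hsin : ∀ i, Real.sin (b i * τ / 2) ≠ 0)
    (h : Fin 2 × Fin n → ℝ) :
    IsUnit (Dmat n b τ) ∧
    gradz n b τ h ⬝ᵥ
        (Dmat n b τ)⁻¹.mulVec (xhat n b τ h - τ • hhat n b τ h) -
      (zhat n b τ h -
        τ * ∑ i, Real.sqrt (h (0, i) ^ 2 + h (1, i) ^ 2) ^ 2 / 2 *
          (1 - Real.cos (b i * τ))) =
    ∑ i, Real.sqrt (h (0, i) ^ 2 + h (1, i) ^ 2) ^ 2 / 2 *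
      (3 * τ - b i * τ ^ 2 * Real.cos (b i * τ / 2) / Real.sin (b i * τ / 2) -
        Real.sin (b i * τ) / b i) := by
  refine ⟨Dmat_isUnit n b hb τ hsin, ?_⟩
  have hsq : ∀ i : Fin n, Real.sqrt (h (0,i)^2 + h (1,i)^2) ^ 2 = h (0,i)^2 + h (1,i)^2 :=
    fun i => Real.sq_sqrt (by positivity)
  simp only [hsq]
  rw [Dmat_inv n b hb τ hsin]
  simp only [xhat, hhat, Dmat_eq n b hb τ, exp_tJbar, zhat, gradz]
  simp only [dotProduct, bd_mulVec, Pi.sub_apply, Pi.smul_apply, smul_eq_mul,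
    Fin.sum_univ_two]
  rw [Fintype.sum_prod_type, Fin.sum_univ_two, Finset.mul_sum, ← Finset.sum_add_distrib,
    ← Finset.sum_sub_distrib, ← Finset.sum_sub_distrib]
  refine Finset.sum_congr rfl fun i _ => ?_
  simp only [Emat, Matrix.smul_apply, smul_eq_mul, gradz]
  simp only [Matrix.cons_val', Matrix.cons_val_zero, Matrix.cons_val_one, Matrix.head_cons,
    Matrix.head_fin_const, Matrix.empty_val', Matrix.cons_val_fin_one, Matrix.of_apply]
  exact key (b i) τ (h (0, i)) (h (1, i)) (hb i).ne' (hsin i)
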